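/- Let E_1, ..., E_t be pairwise disjoint events in a probability space such that the probability of their union is p and each E_i has probability at most p/2. Then there exists a partition of [t] into two sets X and Y such that for each Z in {X, Y}, the probability of the union of the events indexed by Z lies in the interval [p/4, 3p/4]. -/
import Mathlib


/-- Disjoint events with union of probability `p`, each of probability at most `p/2`,
can be partitioned into two groups each of probability in `[p/4, 3p/4]`. -/
theorem event_partition
    {Ω : Type*} [Fintype Ω] [DecidableEq Ω] (w : Ω → ℝ) (hw : ∀ ω, 0 ≤ w ω)
    (hw1 : ∑ ω, w ω = 1)
    (t : ℕ) (E : Fin t → Finset Ω)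
    (hdisj : ∀ i j, i ≠ j → Disjoint (E i) (E j))
    (p : ℝ)
    (hp : ∑ ω ∈ Finset.univ.biUnion E, w ω = p)
    (hsmall : ∀ i, ∑ ω ∈ E i, w ω ≤ p / 2) :
    ∃ X : Finset (Fin t),
      p / 4 ≤ ∑ ω ∈ X.biUnion E, w ω ∧ ∑ ω ∈ X.biUnion E, w ω ≤ 3 * p / 4 ∧
      p / 4 ≤ ∑ ω ∈ Xᶜ.biUnion E, w ω ∧ ∑ ω ∈ Xᶜ.biUnion E, w ω ≤ 3 * p / 4 := by
  set s : Fin t → ℝ := fun i => ∑ ω ∈ E i, w ω with hsdef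
  have hsum : ∀ X : Finset (Fin t), ∑ ω ∈ X.biUnion E, w ω = ∑ i ∈ X, s i := by
    intro X
    exact Finset.sum_biUnion (fun i _ j _ hij => hdisj i j hij)
  have hs0 : ∀ i, 0 ≤ s i := fun i => Finset.sum_nonneg fun ω _ => hw ω
  have hptot : ∑ i, s i = p := by rw [← hsum]; exact hp
  have hp0 : 0 ≤ p := hptot ▸ Finset.sum_nonneg fun i _ => hs0 i
  have hcomp : ∀ X : Finset (Fin t), ∑ i ∈ Xᶜ, s i = p - ∑ i ∈ X, s i := by
    intro X
    have h := Finset.sum_add_sum_compl X s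
    rw [hptot] at h
    linarith
  obtain ⟨X, hX, hmax⟩ := Finset.exists_max_image
    ((Finset.univ : Finset (Finset (Fin t))).filter fun X => ∑ i ∈ X, s i ≤ 3 * p / 4)
    (fun X => ∑ i ∈ X, s i) ⟨∅, by simp; linarith⟩
  have hXle : ∑ i ∈ X, s i ≤ 3 * p / 4 := (Finset.mem_filter.mp hX).2
  have hXge : p / 4 ≤ ∑ i ∈ X, s i := by
    by_contra hlt
    push_neg at hlt
    have hz : ∀ i ∈ Xᶜ, s i = 0 := by
      intro i hi
      have hiX : i ∉ X := Finset.mem_compl.mp hi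
      have h1 : ∑ j ∈ insert i X, s j = s i + ∑ j ∈ X, s j :=
        Finset.sum_insert hiX
      have h2 : insert i X ∈ (Finset.univ : Finset (Finset (Fin t))).filter
          fun Y => ∑ j ∈ Y, s j ≤ 3 * p / 4 := by
        refine Finset.mem_filter.mpr ⟨Finset.mem_univ _, ?_⟩
        have := hsmall i
        rw [h1]; linarith
      have h3 := hmax _ h2
      rw [h1] at h3
      have := hs0 i
      linarith
    have hc0 : ∑ i ∈ Xᶜ, s i = 0 := Finset.sum_eq_zero hz
    rw [hcomp X] at hc0
    linarith
  refine ⟨X, ?_, ?_, ?_, ?_⟩ <;> rw [hsum]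
  · exact hXge
  · exact hXle
  · rw [hcomp]; linarith
  · rw [hcomp]; linarith
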